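/- Let D ≥ 1 and n ≥ 0 be integers, x > 0 a real number, and ω = exp(−2πi/D). Define λ⁰ : Fin D × Fin D → ℝ by λ⁰(k,j) = (1 + x·[k=0][j=0])/(D²+x), and define Λ : Fin D × Fin D → ℂ by Λ(k,j) = ∑_{k'=0}^{D−1} ω^{k·k'} · (∑_{k''=0}^{D−1} ω^{k''·k'} · λ⁰(k'',j))^{2ⁿ}. Then Λ(0,0) / ∑_{k,j} Λ(k,j) = ((x+D)^{2ⁿ} + (D−1)·x^{2ⁿ}) / (D·((x+D)^{2ⁿ} + (D−1)·D^{2ⁿ})). -/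

import Mathlib

/-- With `ω = exp(−2πi/D)`,
`λ⁰(k,j) = (1 + x·[k=0][j=0])/(D²+x)` and
`Λ(k,j) = ∑_{k'} ω^{kk'} (∑_{k''} ω^{k''k'} λ⁰(k'',j))^{2ⁿ}`, the normalized fidelity is
`Λ(0,0)/∑_{k,j} Λ(k,j) = ((x+D)^{2ⁿ} + (D−1)x^{2ⁿ}) / (D((x+D)^{2ⁿ} + (D−1)D^{2ⁿ}))`. -/
theorem alber_protocol_fidelity (D : ℕ) (hD : 0 < D) (n : ℕ) (x : ℝ) (hx : 0 < x)
    (ω : ℂ) (hω : ω = Complex.exp (-2 * Real.pi * Complex.I / D))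
    (lam0 : Fin D × Fin D → ℝ)
    (hlam0 : ∀ k j : Fin D,
      lam0 (k, j) = (1 + if k.val = 0 ∧ j.val = 0 then x else 0) / ((D : ℝ)^2 + x))
    (Λ : Fin D × Fin D → ℂ)
    (hΛ : ∀ k j : Fin D,
      Λ (k, j) = ∑ k' : Fin D, ω^(k.val * k'.val) *
        (∑ k'' : Fin D, ω^(k''.val * k'.val) * (lam0 (k'', j) : ℂ))^(2^n)) :
    Λ (⟨0, hD⟩, ⟨0, hD⟩) / ∑ s : Fin D × Fin D, Λ s =
      (((x : ℂ) + D)^(2^n) + ((D : ℂ) - 1) * (x : ℂ)^(2^n)) /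
        ((D : ℂ) * (((x : ℂ) + D)^(2^n) + ((D : ℂ) - 1) * (D : ℂ)^(2^n))) := by
  classical
  set N := 2^n with hN
  have hDne : (D:ℂ) ≠ 0 := Nat.cast_ne_zero.mpr hD.ne'
  set c : ℂ := (D:ℂ)^2 + x with hcdef
  have hc : c ≠ 0 := by
    have h1 : (0:ℝ) < (D:ℝ)^2 + x := by positivity
    have : c = (((D:ℝ)^2 + x : ℝ) : ℂ) := by push_cast; rfl
    rw [this]
    exact_mod_cast h1.ne'
  -- ω^D = 1
  have hω1 : ω ^ D = 1 := by
    rw [hω, ← Complex.exp_nat_mul]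
    have : (D:ℂ) * (-2 * Real.pi * Complex.I / D) = -(2 * Real.pi * Complex.I) := by
      field_simp
    rw [this, Complex.exp_neg, Complex.exp_two_pi_mul_I, inv_one]
  -- ω primitive
  have hprim : IsPrimitiveRoot ω D := by
    have h := (Complex.isPrimitiveRoot_exp D hD.ne').inv
    have heq : ω = (Complex.exp (2 * Real.pi * Complex.I / D))⁻¹ := by
      rw [hω, ← Complex.exp_neg]
      congr 1; ring
    rwa [heq]
  -- the root-of-unity sum
  have hsum : ∀ a : Fin D, (∑ b : Fin D, ω ^ (b.val * a.val))
      = if a.val = 0 then (D:ℂ) else 0 := by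
    intro a
    rcases eq_or_ne a.val 0 with h | h
    · simp [h, Finset.card_univ]
    · have hz : ω ^ a.val ≠ 1 :=
        hprim.pow_ne_one_of_pos_of_lt h a.isLt
      have h1 : (∑ b : Fin D, ω ^ (b.val * a.val))
          = ∑ i ∈ Finset.range D, (ω ^ a.val) ^ i := by
        rw [← Fin.sum_univ_eq_sum_range (fun i => (ω ^ a.val) ^ i) D]
        refine Finset.sum_congr rfl fun b _ => ?_
        rw [← pow_mul, mul_comm]
      have h2 : (ω ^ a.val) ^ D = 1 := by
        rw [← pow_mul, mul_comm, pow_mul, hω1, one_pow]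
      rw [h1, geom_sum_eq hz, h2]
      simp [h]
  -- inner sums
  have hxj : ∀ j : Fin D, ((if j.val = 0 then (x:ℂ) else 0) : ℂ) =
      (((if j.val = 0 then x else 0) : ℝ) : ℂ) := by
    intro j; split <;> simp
  have hinner : ∀ (k' j : Fin D),
      (∑ k'' : Fin D, ω^(k''.val * k'.val) * (lam0 (k'', j) : ℂ))
        = ((if k'.val = 0 then (D:ℂ) else 0) + (if j.val = 0 then (x:ℂ) else 0)) / c := by
    intro k' j
    have hterm : ∀ k'' : Fin D, ω^(k''.val * k'.val) * (lam0 (k'', j) : ℂ)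
        = ω^(k''.val * k'.val) / c
          + (if k'' = (⟨0, hD⟩ : Fin D) then (if j.val = 0 then (x:ℂ) else 0) / c else 0) := by
      intro k''
      rw [hlam0]
      push_cast
      rcases eq_or_ne k''.val 0 with h | h
      · have hk : k'' = (⟨0, hD⟩ : Fin D) := Fin.ext h
        rcases eq_or_ne j.val 0 with hj | hj
        · simp [h, hj, hk]; try ring
        · simp [h, hj, hk]; try ring
      · have hk : k'' ≠ (⟨0, hD⟩ : Fin D) := by
          simpa [Fin.ext_iff] using h
        rcases eq_or_ne j.val 0 with hj | hj <;> simp [h, hj, hk] <;> ring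
    rw [Finset.sum_congr rfl fun k'' _ => hterm k'', Finset.sum_add_distrib]
    rw [Finset.sum_ite_eq' Finset.univ]
    simp only [Finset.mem_univ, if_true]
    rw [← Finset.sum_div, hsum k', add_div]
  -- closed form for Λ
  have hΛ' : ∀ k j : Fin D, Λ (k, j)
      = (((D:ℂ) + (if j.val = 0 then (x:ℂ) else 0)) / c)^N
        + ((if k.val = 0 then (D:ℂ) else 0) - 1) * ((if j.val = 0 then (x:ℂ) else 0) / c)^N := by
    intro k j
    rw [hΛ, Finset.sum_congr rfl fun k' _ => by rw [hinner k' j]]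
    rw [← Finset.sum_erase_add _ _ (Finset.mem_univ (⟨0, hD⟩ : Fin D))]
    have hmain : ω ^ (k.val * (⟨0, hD⟩ : Fin D).val)
        * (((if (⟨0, hD⟩ : Fin D).val = 0 then (D:ℂ) else 0) + (if j.val = 0 then (x:ℂ) else 0)) / c) ^ N
        = (((D:ℂ) + (if j.val = 0 then (x:ℂ) else 0)) / c)^N := by
      simp
    have herase : ∀ k' ∈ Finset.univ.erase (⟨0, hD⟩ : Fin D),
        ω ^ (k.val * k'.val)
          * (((if k'.val = 0 then (D:ℂ) else 0) + (if j.val = 0 then (x:ℂ) else 0)) / c) ^ N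
        = ω ^ (k'.val * k.val) * ((if j.val = 0 then (x:ℂ) else 0) / c) ^ N := by
      intro k' hk'
      have h0 : k'.val ≠ 0 := by
        intro h
        exact (Finset.mem_erase.mp hk').1 (Fin.ext h)
      rw [mul_comm k.val k'.val]
      simp [h0]
    rw [Finset.sum_congr rfl herase, ← Finset.sum_mul,
      Finset.sum_erase_eq_sub (Finset.mem_univ (⟨0, hD⟩ : Fin D)), hsum k, hmain]
    simp only [Fin.val_mk, pow_zero, mul_comm]  -- ω^(0*k)=1
    ring_nf
    try simp
  -- sum of an if over Fin D
  have hsumif : ∀ (A B : ℂ), ∑ k : Fin D, (if k.val = 0 then A else B) = A + ((D:ℂ)-1)*B := by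
    intro A B
    have h0 : ∀ k : Fin D, (if k.val = 0 then A else B)
        = B + (if k = (⟨0, hD⟩ : Fin D) then A - B else 0) := by
      intro k
      rcases eq_or_ne k.val 0 with h | h
      · have hk : k = (⟨0, hD⟩ : Fin D) := Fin.ext h
        simp [h, hk]
      · have hk : k ≠ (⟨0, hD⟩ : Fin D) := by simpa [Fin.ext_iff] using h
        simp [h, hk]
    rw [Finset.sum_congr rfl fun k _ => h0 k, Finset.sum_add_distrib,
      Finset.sum_const, Finset.sum_ite_eq' Finset.univ]
    simp [Finset.card_univ]
    ring
  have hNpos : 0 < N := pow_pos (by norm_num) n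
  have hA : Λ (⟨0, hD⟩, ⟨0, hD⟩) = (((D:ℂ)+x)/c)^N + ((D:ℂ)-1)*((x:ℂ)/c)^N := by
    rw [hΛ']; simp
  have hpow1 : ∀ j : Fin D, (((D:ℂ) + (if j.val = 0 then (x:ℂ) else 0))/c)^N
      = if j.val = 0 then (((D:ℂ)+x)/c)^N else ((D:ℂ)/c)^N := by
    intro j; split <;> simp
  have hpow2 : ∀ j : Fin D, ((if j.val = 0 then (x:ℂ) else 0)/c)^N
      = if j.val = 0 then ((x:ℂ)/c)^N else 0 := by
    intro j; split <;> simp [zero_pow hNpos.ne']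
  have hrow : ∀ k : Fin D, ∑ j : Fin D, Λ (k, j)
      = ((((D:ℂ)+x)/c)^N + ((D:ℂ)-1)*((D:ℂ)/c)^N)
        + ((if k.val = 0 then (D:ℂ) else 0) - 1) * (((x:ℂ)/c)^N + ((D:ℂ)-1)*0) := by
    intro k
    rw [Finset.sum_congr rfl fun j _ => by rw [hΛ' k j, hpow1 j, hpow2 j]]
    rw [Finset.sum_add_distrib, ← Finset.mul_sum, hsumif, hsumif]
  have hk0 : ∑ k : Fin D, ((if k.val = 0 then (D:ℂ) else 0) - 1) = 0 := by
    rw [Finset.sum_sub_distrib, hsumif, Finset.sum_const]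
    simp [Finset.card_univ]
  have hB : ∑ s : Fin D × Fin D, Λ s
      = (D:ℂ) * ((((D:ℂ)+x)/c)^N + ((D:ℂ)-1)*((D:ℂ)/c)^N) := by
    rw [Fintype.sum_prod_type, Finset.sum_congr rfl fun k _ => hrow k,
      Finset.sum_add_distrib, Finset.sum_const, ← Finset.sum_mul, hk0]
    simp [Finset.card_univ, nsmul_eq_mul]
    ring
  rw [hA, hB]
  have e1 : (((D:ℂ)+x)/c)^N + ((D:ℂ)-1)*((x:ℂ)/c)^N
      = (((x:ℂ)+D)^N + ((D:ℂ)-1)*(x:ℂ)^N)/c^N := by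
    rw [div_pow, div_pow]; ring
  have e2 : (D:ℂ) * ((((D:ℂ)+x)/c)^N + ((D:ℂ)-1)*((D:ℂ)/c)^N)
      = ((D:ℂ) * (((x:ℂ)+D)^N + ((D:ℂ)-1)*(D:ℂ)^N))/c^N := by
    rw [div_pow, div_pow]; ring
  rw [e1, e2, div_div_div_cancel_right₀ (pow_ne_zero N hc)]
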